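/- Let n ≥ 1. For every k ≥ 1 there exists a positive integer m such that for all f ∈ ℤ₂[ξ₁,…,ξₙ], the m-fold composite (Jq^k)^m(f) has all its coefficients in 2ℤ₂; i.e., (Jq^k)^m maps ℤ₂[ξ₁,…,ξₙ] into 2·ℤ₂[ξ₁,…,ξₙ]. -/

import Mathlib

open MvPolynomial

/-- Total dyadic Steenrod square with a formal variable `t` recording the degree shift:
`ξᵢ ↦ ξᵢ + ξᵢ²·t`.  For a homogeneous `f` of degree `d`, the coefficient of `t^k`
is exactly the homogeneous component of degree `d + k` of the image of `f` under the
algebra endomorphism `ξᵢ ↦ ξᵢ + ξᵢ²`. -/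
noncomputable def JqT (R : Type) [CommRing R] (n : ℕ) :
    MvPolynomial (Fin n) R →ₐ[R] Polynomial (MvPolynomial (Fin n) R) :=
  aeval fun i : Fin n => Polynomial.C (X i) + Polynomial.C (X i ^ 2) * Polynomial.X

/-- The `k`-th (dyadic, for `R = ℤ_[2]`) Steenrod square `Jq^k`, as an `R`-linear
endomorphism of `R[ξ₁,…,ξₙ]`: it sends a homogeneous polynomial of degree `d` to the
homogeneous component of degree `d + k` of its image under the algebra endomorphism
`ξᵢ ↦ ξᵢ + ξᵢ²`. -/
noncomputable def Jq (R : Type) [CommRing R] (n : ℕ) (k : ℕ) :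
    MvPolynomial (Fin n) R →ₗ[R] MvPolynomial (Fin n) R :=
  (LinearMap.restrictScalars R (Polynomial.lcoeff (MvPolynomial (Fin n) R) k)).comp
    (JqT R n).toLinearMap

/-! ### Auxiliary number theory: bit reversal -/

/-- Bit-reversal of the low `T` bits of `x`. -/
def JqRev : ℕ → ℕ → ℕ
  | 0, _ => 0
  | T + 1, x => x % 2 * 2 ^ T + JqRev T (x / 2)

lemma jqRev_lt (T x : ℕ) : JqRev T x < 2 ^ T := by
  induction T generalizing x with
  | zero => simp [JqRev]
  | succ T ih =>
    have h := ih (x / 2)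
    have h2 : x % 2 ≤ 1 := by omega
    have : x % 2 * 2 ^ T ≤ 2 ^ T := by
      calc x % 2 * 2 ^ T ≤ 1 * 2 ^ T := Nat.mul_le_mul_right _ h2
      _ = 2 ^ T := one_mul _
    simp only [JqRev, pow_succ]
    omega

lemma jqRev_zero (T : ℕ) : JqRev T 0 = 0 := by
  induction T with
  | zero => rfl
  | succ T ih => simp [JqRev, ih]

lemma jqRev_add_le_carry (T : ℕ) : ∀ x y c : ℕ, c ≤ 1 →
    JqRev T (x + y + c) ≤ JqRev T x + JqRev T y + c * (2 ^ T - 1) := by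
  induction T with
  | zero => intro x y c _; simp [JqRev]
  | succ T ih =>
    intro x y c hc
    obtain ⟨c', hc', hdiv, hmod⟩ : ∃ c', c' ≤ 1 ∧ (x + y + c) / 2 = x / 2 + y / 2 + c' ∧
        (x + y + c) % 2 + 2 * c' = x % 2 + y % 2 + c := by
      refine ⟨(x % 2 + y % 2 + c) / 2, by omega, by omega, by omega⟩
    simp only [JqRev]
    rw [hdiv]
    have H := ih (x / 2) (y / 2) c' hc'
    have hP : 1 ≤ 2 ^ T := Nat.one_le_two_pow
    have hx : x % 2 ≤ 1 := by omega
    have hy : y % 2 ≤ 1 := by omega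
    have hb : (x + y + c) % 2 ≤ 1 := by omega
    set P := 2 ^ T with hPdef
    have hpow : 2 ^ (T + 1) = 2 * P := by rw [pow_succ]; ring
    rw [hpow]
    interval_cases h1 : x % 2 <;> interval_cases h2 : y % 2 <;> interval_cases c <;>
      interval_cases c' <;> simp_all <;> omega

/-- Lucas's theorem step for `p = 2`. -/
lemma jq_lucas_two (e j : ℕ) :
    Nat.choose e j % 2 = Nat.choose (e % 2) (j % 2) * Nat.choose (e / 2) (j / 2) % 2 := by
  haveI : Fact (Nat.Prime 2) := ⟨Nat.prime_two⟩
  exact Choose.choose_modEq_choose_mod_mul_choose_div_nat (p := 2)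

/-- The key decrease lemma: adding `j` with odd binomial coefficient strictly
decreases the bit reversal. -/
lemma jqRev_choose_lt {T e j : ℕ} (hj : 1 ≤ j) (hjT : j < 2 ^ T)
    (hodd : Nat.choose e j % 2 = 1) : JqRev T (e + j) < JqRev T e := by
  induction T generalizing e j with
  | zero => omega
  | succ T ih =>
    have hl := jq_lucas_two e j
    rcases Nat.even_or_odd j with hje | hjo
    · have hj2 : j % 2 = 0 := Nat.even_iff.mp hje
      have hrec : Nat.choose (e / 2) (j / 2) % 2 = 1 := by
        rw [hj2] at hl; simp at hl; omega
      have h1 : 1 ≤ j / 2 := by omega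
      have h2 : j / 2 < 2 ^ T := by
        have : j < 2 * 2 ^ T := by rw [← pow_succ']; exact hjT
        omega
      have hIH := ih h1 h2 hrec
      simp only [JqRev]
      have hmod : (e + j) % 2 = e % 2 := by omega
      have hdiv : (e + j) / 2 = e / 2 + j / 2 := by omega
      rw [hmod, hdiv]
      omega
    · have hj2 : j % 2 = 1 := Nat.odd_iff.mp hjo
      have he2 : e % 2 = 1 := by
        rcases Nat.even_or_odd e with he | he
        · have : e % 2 = 0 := Nat.even_iff.mp he
          rw [this, hj2] at hl
          simp [Nat.choose] at hl
          omega
        · exact Nat.odd_iff.mp he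
      have hmod : (e + j) % 2 = 0 := by omega
      simp only [JqRev, hmod, he2, Nat.zero_mul, one_mul]
      have := jqRev_lt T ((e + j) / 2)
      omega

/-! ### The potential function `Φ` on exponent vectors -/

/-- Sum of bit reversals of the coordinates. -/
def JqPhi (T : ℕ) {n : ℕ} (J : Fin n →₀ ℕ) : ℕ := ∑ i : Fin n, JqRev T (J i)

lemma jqPhi_add_le (T : ℕ) {n : ℕ} (a b : Fin n →₀ ℕ) :
    JqPhi T (a + b) ≤ JqPhi T a + JqPhi T b := by
  rw [JqPhi, JqPhi, JqPhi, ← Finset.sum_add_distrib]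
  apply Finset.sum_le_sum
  intro i _
  have := jqRev_add_le_carry T (a i) (b i) 0 (by omega)
  simpa [Finsupp.add_apply] using this

lemma jqPhi_zero (T : ℕ) {n : ℕ} : JqPhi T (0 : Fin n →₀ ℕ) = 0 := by
  simp [JqPhi, jqRev_zero]

lemma jqPhi_single (T : ℕ) {n : ℕ} (i : Fin n) (a : ℕ) :
    JqPhi T (Finsupp.single i a) = JqRev T a := by
  rw [JqPhi]
  rw [Finset.sum_eq_single_of_mem i (Finset.mem_univ i)]
  · simp
  · intro i' _ hne
    rw [Finsupp.single_apply, if_neg (by exact fun h => hne h.symm), jqRev_zero]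

lemma jqPhi_lt (T : ℕ) {n : ℕ} (hn : 1 ≤ n) (J : Fin n →₀ ℕ) :
    JqPhi T J < n * 2 ^ T := by
  have h1 : JqPhi T J ≤ ∑ _i : Fin n, (2 ^ T - 1) := by
    apply Finset.sum_le_sum
    intro i _
    have := jqRev_lt T (J i)
    omega
  have h2 : ∑ _i : Fin n, (2 ^ T - 1) = n * (2 ^ T - 1) := by
    rw [Finset.sum_const, Finset.card_univ, Fintype.card_fin, smul_eq_mul]
  calc JqPhi T J ≤ n * (2 ^ T - 1) := h2 ▸ h1
  _ < n * 2 ^ T := by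
    have h3 : 2 ^ T - 1 < 2 ^ T := by
      have : 1 ≤ 2 ^ T := Nat.one_le_two_pow
      omega
    exact mul_lt_mul_of_pos_left h3 (by omega)

/-! ### The coefficient formula for a single factor -/

lemma jq_coeff_F_pow {R : Type} [CommRing R] {n : ℕ} (i : Fin n) (e j : ℕ) :
    ((Polynomial.C (X i) + Polynomial.C (X i ^ 2) * Polynomial.X :
      Polynomial (MvPolynomial (Fin n) R)) ^ e).coeff j
    = (e.choose j : MvPolynomial (Fin n) R) * X i ^ (e + j) := by
  rw [add_comm (Polynomial.C (X i)), add_pow, Polynomial.finset_sum_coeff]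
  have hterm : ∀ m ∈ Finset.range (e + 1),
      ((Polynomial.C (X i ^ 2) * Polynomial.X) ^ m * Polynomial.C (X i) ^ (e - m) *
        (e.choose m : Polynomial (MvPolynomial (Fin n) R))).coeff j
      = if j = m then (e.choose m : MvPolynomial (Fin n) R) * X i ^ (e + m) else 0 := by
    intro m hm
    rw [Finset.mem_range] at hm
    rw [mul_pow, ← Polynomial.C_pow, ← Polynomial.C_pow]
    have h1 : Polynomial.C ((X i ^ 2) ^ m) * Polynomial.X ^ m *
        Polynomial.C ((X i : MvPolynomial (Fin n) R) ^ (e - m)) =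
        Polynomial.C ((X i : MvPolynomial (Fin n) R) ^ (e + m)) * Polynomial.X ^ m := by
      rw [mul_right_comm, ← Polynomial.C_mul, ← pow_mul, ← pow_add,
        show 2 * m + (e - m) = e + m from by omega]
    rw [h1, Polynomial.coeff_mul_natCast, Polynomial.coeff_C_mul, Polynomial.coeff_X_pow]
    split_ifs with h
    · ring
    · simp
  rw [Finset.sum_congr rfl hterm, Finset.sum_ite_eq]
  split_ifs with h
  · rfl
  · rw [Finset.mem_range] at h
    have : e.choose j = 0 := Nat.choose_eq_zero_of_lt (by omega)
    rw [this]
    simp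

/-! ### The `Good` predicate and its multiplicativity -/

/-- `JqGood k T q w` says that every monomial appearing in the `t^j`-coefficient of `q`
(for `j ≤ k`) has potential at most `w`, with strict decrease once `j ≥ 1`. -/
def JqGood (k T : ℕ) {n : ℕ} (q : Polynomial (MvPolynomial (Fin n) (ZMod 2))) (w : ℕ) : Prop :=
  ∀ j ≤ k, ∀ J ∈ (q.coeff j).support, JqPhi T J + min j 1 ≤ w

lemma jqGood_one (k T : ℕ) {n : ℕ} :
    JqGood k T (1 : Polynomial (MvPolynomial (Fin n) (ZMod 2))) 0 := by
  intro j hj J hJ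
  rw [Polynomial.coeff_one] at hJ
  by_cases h : j = 0
  · rw [if_pos h] at hJ
    have h0 : J = 0 := by
      rw [MvPolynomial.mem_support_iff] at hJ
      by_contra hne
      apply hJ
      rw [MvPolynomial.coeff_one]
      exact if_neg (fun hh => hne hh.symm)
    subst h0
    subst h
    simp [jqPhi_zero]
  · rw [if_neg h] at hJ
    simp at hJ

lemma jqGood_mul (k T : ℕ) {n : ℕ} {q₁ q₂ : Polynomial (MvPolynomial (Fin n) (ZMod 2))}
    {w₁ w₂ : ℕ} (h₁ : JqGood k T q₁ w₁) (h₂ : JqGood k T q₂ w₂) :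
    JqGood k T (q₁ * q₂) (w₁ + w₂) := by
  classical
  intro j hj J hJ
  rw [Polynomial.coeff_mul] at hJ
  have hJ' := MvPolynomial.support_sum hJ
  rw [Finset.mem_biUnion] at hJ'
  obtain ⟨x, hx, hJx⟩ := hJ'
  rw [Finset.HasAntidiagonal.mem_antidiagonal] at hx
  have hJxx := MvPolynomial.support_mul _ _ hJx
  rw [Finset.mem_add] at hJxx
  obtain ⟨J₁, hJ₁, J₂, hJ₂, hJeq⟩ := hJxx
  have H₁ := h₁ x.1 (by omega) J₁ hJ₁
  have H₂ := h₂ x.2 (by omega) J₂ hJ₂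
  have hphi : JqPhi T J ≤ JqPhi T J₁ + JqPhi T J₂ := by
    rw [← hJeq]; exact jqPhi_add_le T J₁ J₂
  omega

lemma jqGood_prod (k T : ℕ) {n : ℕ} {α : Type*} (s : Finset α)
    (q : α → Polynomial (MvPolynomial (Fin n) (ZMod 2))) (w : α → ℕ)
    (h : ∀ i ∈ s, JqGood k T (q i) (w i)) :
    JqGood k T (∏ i ∈ s, q i) (∑ i ∈ s, w i) := by
  classical
  induction s using Finset.induction with
  | empty => simpa using jqGood_one k T
  | insert a s' hx ih =>
    rw [Finset.prod_insert hx, Finset.sum_insert hx]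
    exact jqGood_mul k T (h a (Finset.mem_insert_self a s'))
      (ih fun i hi => h i (Finset.mem_insert_of_mem hi))

lemma jqGood_smul (k T : ℕ) {n : ℕ} (c : ZMod 2)
    {q : Polynomial (MvPolynomial (Fin n) (ZMod 2))} {w : ℕ} (h : JqGood k T q w) :
    JqGood k T (Polynomial.C (MvPolynomial.C c) * q) w := by
  intro j hj J hJ
  rw [Polynomial.coeff_C_mul, MvPolynomial.C_mul'] at hJ
  exact h j hj J (MvPolynomial.support_smul hJ)

lemma jqGood_factor (k T : ℕ) {n : ℕ} (hkT : k < 2 ^ T) (i : Fin n) (e : ℕ) :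
    JqGood k T ((Polynomial.C (X i) + Polynomial.C (X i ^ 2) * Polynomial.X :
      Polynomial (MvPolynomial (Fin n) (ZMod 2))) ^ e) (JqRev T e) := by
  intro j hj J hJ
  rw [jq_coeff_F_pow] at hJ
  rcases Nat.even_or_odd (e.choose j) with hpar | hpar
  · have : ((e.choose j : ℕ) : MvPolynomial (Fin n) (ZMod 2)) = 0 := by
      have h2 : ((e.choose j : ℕ) : ZMod 2) = 0 :=
        (ZMod.natCast_eq_zero_iff _ _).mpr hpar.two_dvd
      rw [← MvPolynomial.C_eq_coe_nat, h2, map_zero]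
    rw [this, zero_mul] at hJ
    simp at hJ
  · have hodd : e.choose j % 2 = 1 := Nat.odd_iff.mp hpar
    have : ((e.choose j : ℕ) : MvPolynomial (Fin n) (ZMod 2)) = 1 := by
      rw [← MvPolynomial.C_eq_coe_nat, ← ZMod.natCast_mod, hodd]
      simp
    rw [this, one_mul] at hJ
    rw [MvPolynomial.support_X_pow] at hJ
    rw [Finset.mem_singleton] at hJ
    subst hJ
    rw [jqPhi_single]
    rcases Nat.eq_zero_or_pos j with h0 | h1
    · subst h0; simp
    · have := jqRev_choose_lt h1 (lt_of_le_of_lt hj hkT) hodd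
      omega

/-! ### `JqT` on monomials, the key decrease lemma, and nilpotence mod 2 -/

lemma jq_apply (R : Type) [CommRing R] (n k : ℕ) (f : MvPolynomial (Fin n) R) :
    Jq R n k f = (JqT R n f).coeff k := rfl

lemma jqGood_monomial (k T : ℕ) {n : ℕ} (hkT : k < 2 ^ T) (b : Fin n →₀ ℕ) (c : ZMod 2) :
    JqGood k T (JqT (ZMod 2) n (monomial b c)) (JqPhi T b) := by
  classical
  rw [JqT, aeval_monomial]
  have halg : (algebraMap (ZMod 2) (Polynomial (MvPolynomial (Fin n) (ZMod 2)))) c =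
      Polynomial.C (MvPolynomial.C c) := rfl
  rw [halg]
  have hprod : (b.prod fun i e =>
      (Polynomial.C (X i) + Polynomial.C (X i ^ 2) * Polynomial.X :
        Polynomial (MvPolynomial (Fin n) (ZMod 2))) ^ e) =
      ∏ i ∈ b.support, (Polynomial.C (X i) + Polynomial.C (X i ^ 2) * Polynomial.X) ^ (b i) :=
    rfl
  rw [hprod]
  have hphi : JqPhi T b = ∑ i ∈ b.support, JqRev T (b i) := by
    rw [JqPhi]
    rw [Finset.sum_subset (Finset.subset_univ b.support)]
    intro i _ hi
    rw [Finsupp.notMem_support_iff.mp hi, jqRev_zero]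
  rw [hphi]
  exact jqGood_smul k T c (jqGood_prod k T b.support _ _
    fun i _ => jqGood_factor k T hkT i (b i))

lemma jq_key {n k T : ℕ} (hk : 1 ≤ k) (hkT : k < 2 ^ T)
    (g : MvPolynomial (Fin n) (ZMod 2)) :
    ∀ J ∈ (Jq (ZMod 2) n k g).support, ∃ b ∈ g.support, JqPhi T J < JqPhi T b := by
  classical
  intro J hJ
  have h1 : Jq (ZMod 2) n k g =
      ∑ b ∈ g.support, (JqT (ZMod 2) n (monomial b (coeff b g))).coeff k := by
    conv_lhs => rw [jq_apply, g.as_sum, map_sum, Polynomial.finset_sum_coeff]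
  rw [h1] at hJ
  have hJ' := MvPolynomial.support_sum hJ
  rw [Finset.mem_biUnion] at hJ'
  obtain ⟨b, hb, hJb⟩ := hJ'
  refine ⟨b, hb, ?_⟩
  have := jqGood_monomial k T hkT b (coeff b g) k (le_refl k) J hJb
  omega

lemma jq_nilpotent {n k T : ℕ} (hk : 1 ≤ k) (hkT : k < 2 ^ T) :
    ∀ N : ℕ, ∀ g : MvPolynomial (Fin n) (ZMod 2),
      (∀ b ∈ g.support, JqPhi T b < N) → (⇑(Jq (ZMod 2) n k))^[N] g = 0 := by
  intro N
  induction N with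
  | zero =>
    intro g hg
    have : g.support = ∅ := by
      by_contra h
      obtain ⟨b, hb⟩ := Finset.nonempty_iff_ne_empty.mpr h
      exact absurd (hg b hb) (by omega)
    simpa using MvPolynomial.support_eq_empty.mp this
  | succ N ih =>
    intro g hg
    rw [Function.iterate_succ_apply]
    apply ih
    intro b' hb'
    obtain ⟨b, hb, hlt⟩ := jq_key hk hkT g b' hb'
    have := hg b hb
    omega

/-! ### Compatibility with reduction mod 2 -/

lemma jqT_map {R S : Type} [CommRing R] [CommRing S] (φ : R →+* S) {n : ℕ}
    (f : MvPolynomial (Fin n) R) :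
    Polynomial.map (MvPolynomial.map φ) (JqT R n f) = JqT S n (MvPolynomial.map φ f) := by
  induction f using MvPolynomial.induction_on with
  | C a =>
    simp [JqT, aeval_C, MvPolynomial.algebraMap_eq, Polynomial.map_C, MvPolynomial.map_C]
  | add p q hp hq => simp [map_add, Polynomial.map_add, hp, hq]
  | mul_X p i hp =>
    simp only [map_mul, Polynomial.map_mul, hp, JqT, aeval_X, MvPolynomial.map_X,
      Polynomial.map_add, Polynomial.map_mul, Polynomial.map_C, Polynomial.map_X, map_pow,
      Polynomial.map_pow]
    refine congrArg (· * _) ?_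
    simpa only [JqT, map_pow] using hp

lemma jq_map {R S : Type} [CommRing R] [CommRing S] (φ : R →+* S) {n k : ℕ}
    (f : MvPolynomial (Fin n) R) :
    MvPolynomial.map φ (Jq R n k f) = Jq S n k (MvPolynomial.map φ f) := by
  rw [jq_apply, jq_apply, ← jqT_map φ f, Polynomial.coeff_map]

lemma jq_pow_map {R S : Type} [CommRing R] [CommRing S] (φ : R →+* S) {n k : ℕ} (N : ℕ)
    (f : MvPolynomial (Fin n) R) :
    MvPolynomial.map φ (((Jq R n k : Module.End R (MvPolynomial (Fin n) R)) ^ N) f) =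
      ((Jq S n k : Module.End S (MvPolynomial (Fin n) S)) ^ N) (MvPolynomial.map φ f) := by
  induction N generalizing f with
  | zero => simp
  | succ N ih =>
    rw [pow_succ, pow_succ, Module.End.mul_apply, Module.End.mul_apply, ih, jq_map]

/-- For every `k ≥ 1` there is a positive integer `m` (the nilpotency degree of `Sq^k`)
such that the `m`-fold composite `(Jq^k)^m` maps `ℤ₂[ξ₁,…,ξₙ]` into
`2·ℤ₂[ξ₁,…,ξₙ]`, i.e. all coefficients of `(Jq^k)^m(f)` are divisible by `2`. -/
theorem jq_power_coeffs_even (n : ℕ) (hn : 1 ≤ n) (k : ℕ) (hk : 1 ≤ k) :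
    ∃ m : ℕ, 0 < m ∧ ∀ f : MvPolynomial (Fin n) ℤ_[2], ∀ J : Fin n →₀ ℕ,
      (2 : ℤ_[2]) ∣ coeff J
        (((Jq ℤ_[2] n k : Module.End ℤ_[2] (MvPolynomial (Fin n) ℤ_[2])) ^ m) f) := by
  have hkT : k < 2 ^ k := Nat.lt_two_pow_self
  refine ⟨n * 2 ^ k, by positivity, ?_⟩
  intro f J
  have hzero : MvPolynomial.map (PadicInt.toZMod (p := 2))
      (((Jq ℤ_[2] n k : Module.End ℤ_[2] (MvPolynomial (Fin n) ℤ_[2])) ^ (n * 2 ^ k)) f) = 0 := by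
    rw [jq_pow_map]
    rw [Module.End.pow_apply]
    apply jq_nilpotent hk hkT
    intro b _
    exact jqPhi_lt k hn b
  have hcoeff : PadicInt.toZMod (coeff J
      (((Jq ℤ_[2] n k : Module.End ℤ_[2] (MvPolynomial (Fin n) ℤ_[2])) ^ (n * 2 ^ k)) f)) = 0 := by
    rw [← MvPolynomial.coeff_map, hzero, MvPolynomial.coeff_zero]
  have hmem : coeff J (((Jq ℤ_[2] n k : Module.End ℤ_[2] (MvPolynomial (Fin n) ℤ_[2]))
      ^ (n * 2 ^ k)) f) ∈ Ideal.span {(2 : ℤ_[2])} := by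
    have h1 := RingHom.mem_ker.mpr hcoeff
    rw [PadicInt.ker_toZMod, PadicInt.maximalIdeal_eq_span_p] at h1
    simpa using h1
  exact Ideal.mem_span_singleton.mp hmem
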